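/- Let (Ω, μ) be a finite measure space, let E, F, G be real normed vector spaces, and let φ : E × F → G be continuous. Let r₁ > 1 and r₂ > 1 be real numbers and suppose there is a constant c > 0 with ‖φ(e, f)‖^{r₁/(r₁−1)} ≤ c·(1 + ‖e‖^{r₁} + ‖f‖^{r₂}) for all (e, f) ∈ E × F. Let u, u₁, u₂, … : Ω → E and v, v₁, v₂, … : Ω → F be strongly measurable functions with ∫_Ω ‖u‖^{r₁} dμ < ∞ and ∫_Ω ‖v‖^{r₂} dμ < ∞, and assume that ∫_Ω ‖uₙ − u‖^{r₁} dμ → 0 and ∫_Ω ‖vₙ − v‖^{r₂} dμ → 0 as n → ∞. Then ∫_Ω ‖φ(uₙ(ω), vₙ(ω)) − φ(u(ω), v(ω))‖^{r₁/(r₁−1)} dμ(ω) → 0 as n → ∞; i.e., the Nemytskii map (u,v) ↦ φ(u,v) is sequentially continuous from L^{r₁}(Ω;E) × L^{r₂}(Ω;F) to L^{r₁/(r₁−1)}(Ω;G). -/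

import Mathlib

open MeasureTheory Filter
open scoped ENNReal NNReal

lemma nemytskii_ofReal_rpow {α : Type*} [NormedAddCommGroup α] {r : ℝ} (hr : 0 < r) (a : α) :
    ENNReal.ofReal (‖a‖ ^ r) = (‖a‖₊ : ℝ≥0∞) ^ r := by
  rw [← ENNReal.ofReal_rpow_of_nonneg (norm_nonneg a) hr.le, ofReal_norm, enorm_eq_nnnorm]

lemma nemytskii_aux_extract {Ω E : Type*} [MeasurableSpace Ω] {μ : MeasureTheory.Measure Ω}
    [NormedAddCommGroup E] {r : ℝ} (hr : 0 < r)
    {u : Ω → E} {w : ℕ → Ω → E} (hu : StronglyMeasurable u)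
    (hw : ∀ k, StronglyMeasurable (w k))
    (hbound : ∀ k, ∫⁻ ω, (‖w k ω - u ω‖₊ : ℝ≥0∞) ^ r ∂μ ≤ 2⁻¹ ^ k) :
    (∀ᵐ ω ∂μ, Tendsto (fun k => w k ω) atTop (nhds (u ω))) ∧
      ∃ g : Ω → ℝ≥0∞, Measurable g ∧ (∫⁻ ω, g ω ∂μ) ≠ ⊤ ∧
        ∀ k ω, (‖w k ω - u ω‖₊ : ℝ≥0∞) ^ r ≤ g ω := by
  set d : ℕ → Ω → ℝ≥0∞ := fun k ω => (‖w k ω - u ω‖₊ : ℝ≥0∞) ^ r with hd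
  have hdmeas : ∀ k, Measurable (d k) := fun k =>
    ENNReal.continuous_rpow_const.measurable.comp ((hw k).sub hu).enorm
  set g : Ω → ℝ≥0∞ := fun ω => ∑' k, d k ω with hg
  have hgmeas : Measurable g := Measurable.ennreal_tsum hdmeas
  have hgfin : (∫⁻ ω, g ω ∂μ) ≠ ⊤ := by
    have h1 : (∫⁻ ω, g ω ∂μ) = ∑' k, ∫⁻ ω, d k ω ∂μ :=
      lintegral_tsum fun k => (hdmeas k).aemeasurable
    have h2 : (∑' k : ℕ, (2⁻¹ : ℝ≥0∞) ^ k) ≠ ⊤ := by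
      rw [ENNReal.tsum_geometric, ENNReal.one_sub_inv_two, inv_inv]
      exact ENNReal.ofNat_ne_top
    refine ne_top_of_le_ne_top h2 ?_
    rw [h1]
    exact ENNReal.tsum_le_tsum hbound
  have hae : ∀ᵐ ω ∂μ, g ω ≠ ⊤ := (ae_lt_top hgmeas hgfin).mono fun ω h => h.ne
  refine ⟨hae.mono fun ω hω => ?_, g, hgmeas, hgfin, fun k ω => ENNReal.le_tsum k⟩
  have h1 : Tendsto (fun k => d k ω) atTop (nhds 0) :=
    ENNReal.tendsto_atTop_zero_of_tsum_ne_top hω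
  have h2 : Tendsto (fun k => (‖w k ω - u ω‖₊ : ℝ≥0∞)) atTop (nhds 0) := by
    have hcomp := ((ENNReal.continuous_rpow_const (y := r⁻¹)).tendsto 0).comp h1
    have heq : ∀ k, ((d k ω) ^ r⁻¹) = (‖w k ω - u ω‖₊ : ℝ≥0∞) := by
      intro k
      rw [hd, ← ENNReal.rpow_mul, mul_inv_cancel₀ hr.ne', ENNReal.rpow_one]
    simpa [Function.comp_def, heq, ENNReal.zero_rpow_of_pos (inv_pos.2 hr)] using hcomp
  rw [tendsto_iff_norm_sub_tendsto_zero]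
  have h3 := (ENNReal.tendsto_toReal ENNReal.zero_ne_top).comp h2
  simpa [Function.comp_def] using h3

theorem nemytskii_sequential_continuity
    {Ω : Type*} [MeasurableSpace Ω] (μ : MeasureTheory.Measure Ω) [IsFiniteMeasure μ]
    {E F G : Type*} [NormedAddCommGroup E] [NormedAddCommGroup F] [NormedAddCommGroup G]
    (φ : E × F → G) (hφ : Continuous φ)
    (r₁ r₂ : ℝ) (hr₁ : 1 < r₁) (hr₂ : 1 < r₂)
    (c : ℝ) (hc : 0 < c)
    (hgrowth : ∀ (e : E) (f : F),
      ‖φ (e, f)‖ ^ (r₁ / (r₁ - 1)) ≤ c * (1 + ‖e‖ ^ r₁ + ‖f‖ ^ r₂))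
    (u : Ω → E) (v : Ω → F) (un : ℕ → Ω → E) (vn : ℕ → Ω → F)
    (hu : StronglyMeasurable u) (hv : StronglyMeasurable v)
    (hun : ∀ n, StronglyMeasurable (un n)) (hvn : ∀ n, StronglyMeasurable (vn n))
    (hui : ∫⁻ ω, ENNReal.ofReal (‖u ω‖ ^ r₁) ∂μ < ⊤)
    (hvi : ∫⁻ ω, ENNReal.ofReal (‖v ω‖ ^ r₂) ∂μ < ⊤)
    (hulim : Tendsto (fun n => ∫⁻ ω, ENNReal.ofReal (‖un n ω - u ω‖ ^ r₁) ∂μ)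
      atTop (nhds 0))
    (hvlim : Tendsto (fun n => ∫⁻ ω, ENNReal.ofReal (‖vn n ω - v ω‖ ^ r₂) ∂μ)
      atTop (nhds 0)) :
    Tendsto (fun n => ∫⁻ ω,
        ENNReal.ofReal (‖φ (un n ω, vn n ω) - φ (u ω, v ω)‖ ^ (r₁ / (r₁ - 1))) ∂μ)
      atTop (nhds 0) := by
  set p : ℝ := r₁ / (r₁ - 1) with hpdef
  have hr₁0 : (0:ℝ) < r₁ := lt_trans one_pos hr₁
  have hr₂0 : (0:ℝ) < r₂ := lt_trans one_pos hr₂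
  have hp0 : 0 < p := div_pos hr₁0 (sub_pos.2 hr₁)
  have hp1 : 1 ≤ p := (one_le_div (sub_pos.2 hr₁)).2 (by linarith)
  -- rewrite ofReal (‖·‖^r) as (↑‖·‖₊)^r
  simp only [nemytskii_ofReal_rpow (α := G) hp0]
  simp only [nemytskii_ofReal_rpow (α := E) hr₁0] at hui hulim
  simp only [nemytskii_ofReal_rpow (α := F) hr₂0] at hvi hvlim
  -- growth bound in ENNReal
  have hG : ∀ (e : E) (f : F), (‖φ (e, f)‖₊ : ℝ≥0∞) ^ p ≤
      ENNReal.ofReal c * (1 + (‖e‖₊ : ℝ≥0∞) ^ r₁ + (‖f‖₊ : ℝ≥0∞) ^ r₂) := by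
    intro e f
    have h1 := hgrowth e f
    calc (‖φ (e, f)‖₊ : ℝ≥0∞) ^ p = ENNReal.ofReal (‖φ (e, f)‖ ^ p) :=
          (nemytskii_ofReal_rpow hp0 _).symm
      _ ≤ ENNReal.ofReal (c * (1 + ‖e‖ ^ r₁ + ‖f‖ ^ r₂)) := ENNReal.ofReal_le_ofReal h1
      _ = ENNReal.ofReal c * (1 + (‖e‖₊ : ℝ≥0∞) ^ r₁ + (‖f‖₊ : ℝ≥0∞) ^ r₂) := by
          rw [ENNReal.ofReal_mul hc.le,
            ENNReal.ofReal_add (by positivity) (by positivity),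
            ENNReal.ofReal_add (by positivity) (by positivity),
            ENNReal.ofReal_one, nemytskii_ofReal_rpow hr₁0, nemytskii_ofReal_rpow hr₂0]
  -- subsequence principle
  refine tendsto_of_subseq_tendsto fun ns hns => ?_
  have hulim' := hulim.comp hns
  have hvlim' := hvlim.comp hns
  have hP : ∀ n : ℕ, ∀ᶠ k in atTop,
      (∫⁻ ω, (‖un (ns k) ω - u ω‖₊ : ℝ≥0∞) ^ r₁ ∂μ) ≤ (2⁻¹ : ℝ≥0∞) ^ n ∧
      (∫⁻ ω, (‖vn (ns k) ω - v ω‖₊ : ℝ≥0∞) ^ r₂ ∂μ) ≤ (2⁻¹ : ℝ≥0∞) ^ n := by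
    intro n
    have hpos : (0 : ℝ≥0∞) < 2⁻¹ ^ n := ENNReal.pow_pos (ENNReal.inv_pos.2 ENNReal.ofNat_ne_top) n
    filter_upwards [hulim'.eventually_lt_const hpos, hvlim'.eventually_lt_const hpos]
      with k h1 h2
    exact ⟨h1.le, h2.le⟩
  obtain ⟨ms, -, hms⟩ := extraction_forall_of_eventually hP
  refine ⟨ms, ?_⟩
  -- apply the extraction lemma
  obtain ⟨huae, gu, hgumeas, hgufin, hgub⟩ :=
    nemytskii_aux_extract (μ := μ) hr₁0 hu (fun k => hun (ns (ms k)))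
      (fun k => (hms k).1)
  obtain ⟨hvae, gv, hgvmeas, hgvfin, hgvb⟩ :=
    nemytskii_aux_extract (μ := μ) hr₂0 hv (fun k => hvn (ns (ms k)))
      (fun k => (hms k).2)
  -- dominating function
  set U : Ω → ℝ≥0∞ := fun ω => (‖u ω‖₊ : ℝ≥0∞) ^ r₁ with hU
  set V : Ω → ℝ≥0∞ := fun ω => (‖v ω‖₊ : ℝ≥0∞) ^ r₂ with hV
  set K : ℝ≥0∞ := 2 ^ (p - 1) * ENNReal.ofReal c * (2 ^ (r₁ - 1) + 2 ^ (r₂ - 1) + 2) with hK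
  set S : Ω → ℝ≥0∞ := fun ω => 1 + U ω + V ω + gu ω + gv ω with hS
  have hKtop : K ≠ ⊤ := by
    refine ENNReal.mul_ne_top (ENNReal.mul_ne_top ?_ ENNReal.ofReal_ne_top) ?_
    · exact ENNReal.rpow_ne_top_of_nonneg (by linarith) (by norm_num)
    · refine ENNReal.add_ne_top.2 ⟨ENNReal.add_ne_top.2 ⟨?_, ?_⟩, by norm_num⟩
      · exact ENNReal.rpow_ne_top_of_nonneg (by linarith) (by norm_num)
      · exact ENNReal.rpow_ne_top_of_nonneg (by linarith) (by norm_num)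
  have hUmeas : Measurable U := ENNReal.continuous_rpow_const.measurable.comp hu.enorm
  have hVmeas : Measurable V := ENNReal.continuous_rpow_const.measurable.comp hv.enorm
  have hSmeas : Measurable S :=
    ((((measurable_const.add hUmeas).add hVmeas).add hgumeas).add hgvmeas)
  have hSfin : (∫⁻ ω, S ω ∂μ) ≠ ⊤ := by
    rw [hS]
    simp only
    rw [lintegral_add_right _ hgvmeas, lintegral_add_right _ hgumeas,
      lintegral_add_right _ hVmeas, lintegral_add_right _ hUmeas, lintegral_const]
    refine ENNReal.add_ne_top.2 ⟨ENNReal.add_ne_top.2 ⟨ENNReal.add_ne_top.2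
      ⟨ENNReal.add_ne_top.2 ⟨?_, hui.ne⟩, hvi.ne⟩, hgufin⟩, hgvfin⟩
    exact ENNReal.mul_ne_top ENNReal.one_ne_top (measure_ne_top μ _)
  -- the sequence of integrands
  set N : ℕ → Ω → ℝ≥0∞ := fun k ω =>
    (‖φ (un (ns (ms k)) ω, vn (ns (ms k)) ω) - φ (u ω, v ω)‖₊ : ℝ≥0∞) ^ p with hN
  have hNmeas : ∀ k, Measurable (N k) := by
    intro k
    have h1 : StronglyMeasurable fun ω => φ (un (ns (ms k)) ω, vn (ns (ms k)) ω) :=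
      hφ.comp_stronglyMeasurable ((hun _).prodMk (hvn _))
    have h2 : StronglyMeasurable fun ω => φ (u ω, v ω) :=
      hφ.comp_stronglyMeasurable (hu.prodMk hv)
    exact ENNReal.continuous_rpow_const.measurable.comp (h1.sub h2).enorm
  -- pointwise bound
  have hNbound : ∀ k ω, N k ω ≤ K * S ω := by
    intro k ω
    set a := φ (un (ns (ms k)) ω, vn (ns (ms k)) ω) with ha
    set b := φ (u ω, v ω) with hb
    have step1 : (‖a - b‖₊ : ℝ≥0∞) ^ p ≤
        2 ^ (p - 1) * ((‖a‖₊ : ℝ≥0∞) ^ p + (‖b‖₊ : ℝ≥0∞) ^ p) := by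
      calc (‖a - b‖₊ : ℝ≥0∞) ^ p ≤ ((‖a‖₊ : ℝ≥0∞) + (‖b‖₊ : ℝ≥0∞)) ^ p := by
            apply ENNReal.rpow_le_rpow _ (by linarith)
            rw [← ENNReal.coe_add]
            exact_mod_cast nnnorm_sub_le a b
        _ ≤ _ := ENNReal.rpow_add_le_mul_rpow_add_rpow _ _ hp1
    have stepu : (‖un (ns (ms k)) ω‖₊ : ℝ≥0∞) ^ r₁ ≤ 2 ^ (r₁ - 1) * (U ω + gu ω) := by
      calc (‖un (ns (ms k)) ω‖₊ : ℝ≥0∞) ^ r₁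
          ≤ ((‖u ω‖₊ : ℝ≥0∞) + (‖un (ns (ms k)) ω - u ω‖₊ : ℝ≥0∞)) ^ r₁ := by
            apply ENNReal.rpow_le_rpow _ hr₁0.le
            rw [← ENNReal.coe_add]
            refine ENNReal.coe_le_coe.2 ?_
            calc ‖un (ns (ms k)) ω‖₊ = ‖u ω + (un (ns (ms k)) ω - u ω)‖₊ := by
                  rw [add_sub_cancel]
              _ ≤ _ := nnnorm_add_le _ _
        _ ≤ 2 ^ (r₁ - 1) * ((‖u ω‖₊ : ℝ≥0∞) ^ r₁ +
              (‖un (ns (ms k)) ω - u ω‖₊ : ℝ≥0∞) ^ r₁) :=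
            ENNReal.rpow_add_le_mul_rpow_add_rpow _ _ hr₁.le
        _ ≤ 2 ^ (r₁ - 1) * (U ω + gu ω) := by gcongr; exact hgub k ω
    have stepv : (‖vn (ns (ms k)) ω‖₊ : ℝ≥0∞) ^ r₂ ≤ 2 ^ (r₂ - 1) * (V ω + gv ω) := by
      calc (‖vn (ns (ms k)) ω‖₊ : ℝ≥0∞) ^ r₂
          ≤ ((‖v ω‖₊ : ℝ≥0∞) + (‖vn (ns (ms k)) ω - v ω‖₊ : ℝ≥0∞)) ^ r₂ := by
            apply ENNReal.rpow_le_rpow _ hr₂0.le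
            rw [← ENNReal.coe_add]
            refine ENNReal.coe_le_coe.2 ?_
            calc ‖vn (ns (ms k)) ω‖₊ = ‖v ω + (vn (ns (ms k)) ω - v ω)‖₊ := by
                  rw [add_sub_cancel]
              _ ≤ _ := nnnorm_add_le _ _
        _ ≤ 2 ^ (r₂ - 1) * ((‖v ω‖₊ : ℝ≥0∞) ^ r₂ +
              (‖vn (ns (ms k)) ω - v ω‖₊ : ℝ≥0∞) ^ r₂) :=
            ENNReal.rpow_add_le_mul_rpow_add_rpow _ _ hr₂.le
        _ ≤ 2 ^ (r₂ - 1) * (V ω + gv ω) := by gcongr; exact hgvb k ω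
    have h2a : (‖a‖₊ : ℝ≥0∞) ^ p ≤
        ENNReal.ofReal c * (1 + 2 ^ (r₁ - 1) * (U ω + gu ω) + 2 ^ (r₂ - 1) * (V ω + gv ω)) := by
      refine (hG _ _).trans ?_
      gcongr
    have h2b : (‖b‖₊ : ℝ≥0∞) ^ p ≤ ENNReal.ofReal c * (1 + U ω + V ω) := hG _ _
    have hsum : (1 + 2 ^ (r₁ - 1) * (U ω + gu ω) + 2 ^ (r₂ - 1) * (V ω + gv ω))
        + (1 + U ω + V ω) ≤ (2 ^ (r₁ - 1) + 2 ^ (r₂ - 1) + 2) * S ω := by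
      have hSω : S ω = 1 + U ω + V ω + gu ω + gv ω := rfl
      have hS1 : (1:ℝ≥0∞) ≤ S ω := by
        rw [hSω]; exact ((le_self_add.trans le_self_add).trans le_self_add).trans le_self_add
      have hSu : U ω + gu ω ≤ S ω := by
        rw [hSω]
        exact (add_le_add_left (le_add_self.trans le_self_add) _).trans le_self_add
      have hSv : V ω + gv ω ≤ S ω := by
        rw [hSω]
        exact add_le_add_left (le_add_self.trans le_self_add) _
      have hSuv : (1 + U ω + V ω : ℝ≥0∞) ≤ S ω := by
        rw [hSω]; exact le_self_add.trans le_self_add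
      calc (1 + 2 ^ (r₁ - 1) * (U ω + gu ω) + 2 ^ (r₂ - 1) * (V ω + gv ω))
            + (1 + U ω + V ω)
          ≤ (S ω + 2 ^ (r₁ - 1) * S ω + 2 ^ (r₂ - 1) * S ω) + S ω := by gcongr
        _ = (2 ^ (r₁ - 1) + 2 ^ (r₂ - 1) + 2) * S ω := by ring
    calc N k ω ≤ 2 ^ (p - 1) * ((‖a‖₊ : ℝ≥0∞) ^ p + (‖b‖₊ : ℝ≥0∞) ^ p) := step1
      _ ≤ 2 ^ (p - 1) * (ENNReal.ofReal c *
          ((1 + 2 ^ (r₁ - 1) * (U ω + gu ω) + 2 ^ (r₂ - 1) * (V ω + gv ω))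
            + (1 + U ω + V ω))) := by
          rw [mul_add (ENNReal.ofReal c)]
          gcongr
      _ ≤ 2 ^ (p - 1) * (ENNReal.ofReal c * ((2 ^ (r₁ - 1) + 2 ^ (r₂ - 1) + 2) * S ω)) := by
          gcongr
      _ = K * S ω := by rw [hK]; ring
  -- a.e. convergence to 0
  have hNlim : ∀ᵐ ω ∂μ, Tendsto (fun k => N k ω) atTop (nhds 0) := by
    filter_upwards [huae, hvae] with ω h1 h2
    have h3 : Tendsto (fun k => φ (un (ns (ms k)) ω, vn (ns (ms k)) ω) - φ (u ω, v ω))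
        atTop (nhds 0) := by
      have h4 : Tendsto (fun k => (un (ns (ms k)) ω, vn (ns (ms k)) ω)) atTop
          (nhds (u ω, v ω)) := h1.prodMk_nhds h2
      have h5 := (hφ.tendsto _).comp h4
      have := h5.sub (tendsto_const_nhds (x := φ (u ω, v ω)))
      simpa using this
    have hcont : Continuous fun z : G => (‖z‖₊ : ℝ≥0∞) ^ p :=
      ENNReal.continuous_rpow_const.comp (ENNReal.continuous_coe.comp continuous_nnnorm)
    have := (hcont.tendsto 0).comp h3
    simpa [Function.comp_def, ENNReal.zero_rpow_of_pos hp0] using this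
  -- dominated convergence
  have hfin : (∫⁻ ω, K * S ω ∂μ) ≠ ⊤ := by
    rw [lintegral_const_mul' _ _ hKtop]
    exact ENNReal.mul_ne_top hKtop hSfin
  have := tendsto_lintegral_of_dominated_convergence (μ := μ) (F := N) (f := fun _ => 0)
    (fun ω => K * S ω) hNmeas (fun k => Eventually.of_forall fun ω => hNbound k ω) hfin
    (by filter_upwards [hNlim] with ω h using h)
  simpa [lintegral_zero] using this
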